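/- Let X be a real Hilbert space and let {x_h} ⊆ X be a bounded sequence and x ∈ X. Then x_h converges weakly to x in the Hilbert space sense (⟨x_h, y⟩ → ⟨x, y⟩ for all y ∈ X) if and only if for every subsequence {x_{h_k}}, the point x is the unique minimizer of y ↦ limsup_k ‖y − x_{h_k}‖². -/

import Mathlib

open Filter Topology MeasureTheory
open scoped ENNReal NNReal Classical

section Defs

variable {X : Type*} [MetricSpace X]

/-- The descending slope `|∂f|(x)` of `f : X → ℝ ∪ {+∞}`.  It is `+∞` outside of the effective
domain, and otherwise `limsup_{y → x} (f x - f y)⁺ / d(y,x)` (which is `0` at isolated points,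
since then the limsup is taken along the bottom filter). -/
noncomputable def descSlope (f : X → EReal) (x : X) : ℝ≥0∞ :=
  if f x = ⊤ then ⊤
  else Filter.limsup (fun y => ENNReal.ofReal (((f x - f y) ⊔ 0).toReal / dist y x)) (𝓝[≠] x)

/-- The (upper) metric speed of a curve at a point: where the metric derivative
`lim_{s → t} d(γ s, γ t)/|s - t|` exists, it coincides with this limsup. -/
noncomputable def mSpeed (γ : ℝ → X) (t : ℝ) : ℝ≥0∞ :=
  Filter.limsup (fun s => ENNReal.ofReal (dist (γ s) (γ t) / |s - t|)) (𝓝[≠] t)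

/-- A curve is absolutely continuous on `[a,b]` if its increments are controlled by the
integral of some nonnegative integrable function. -/
def IsACCurveOn (γ : ℝ → X) (a b : ℝ) : Prop :=
  ∃ g : ℝ → ℝ, MeasureTheory.IntegrableOn g (Set.Icc a b) ∧ (∀ t, 0 ≤ g t) ∧
    ∀ s t : ℝ, a ≤ s → s ≤ t → t ≤ b → dist (γ s) (γ t) ≤ ∫ r in s..t, g r

/-- The action integral `∫₀¹ |γ̇|²(t) + |∂f|²(γ(t)) dt`. -/
noncomputable def actionIntegral (f : X → EReal) (γ : ℝ → X) : ℝ≥0∞ :=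
  ∫⁻ t in Set.Ioo (0:ℝ) 1, ((mSpeed γ t) ^ 2 + (descSlope f (γ t)) ^ 2)

/-- The action functional `Θ^f_{x₀,x₁}`. -/
noncomputable def Theta (f : X → EReal) (x₀ x₁ : X) (γ : ℝ → X) : ℝ≥0∞ :=
  if IsACCurveOn γ 0 1 ∧ γ 0 = x₀ ∧ γ 1 = x₁ then actionIntegral f γ else ⊤

/-- `γ : [0,1] → X` is a constant speed geodesic. -/
def IsGeodesic (γ : ℝ → X) : Prop :=
  ∀ s ∈ Set.Icc (0:ℝ) 1, ∀ t ∈ Set.Icc (0:ℝ) 1,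
    dist (γ s) (γ t) = |s - t| * dist (γ 0) (γ 1)

/-- Every pair of points is joined by a constant speed geodesic. -/
def GeodesicSp (X : Type*) [MetricSpace X] : Prop :=
  ∀ x y : X, ∃ γ : ℝ → X, IsGeodesic γ ∧ γ 0 = x ∧ γ 1 = y

/-- `X` is a CAT(0) space. -/
def IsCAT0 (X : Type*) [MetricSpace X] : Prop :=
  GeodesicSp X ∧ ∀ (y : X) (γ : ℝ → X), IsGeodesic γ → ∀ t ∈ Set.Icc (0:ℝ) 1,
    dist y (γ t) ^ 2 ≤ (1 - t) * dist y (γ 0) ^ 2 + t * dist y (γ 1) ^ 2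
      - t * (1 - t) * dist (γ 0) (γ 1) ^ 2

/-- `f` is `λ`-convex along every constant speed geodesic. -/
def LambdaConvex (f : X → EReal) (lam : ℝ) : Prop :=
  ∀ γ : ℝ → X, IsGeodesic γ → ∀ t ∈ Set.Icc (0:ℝ) 1,
    f (γ t) ≤ ((1 - t : ℝ) : EReal) * f (γ 0) + ((t : ℝ) : EReal) * f (γ 1)
      - ((lam / 2 * t * (1 - t) * dist (γ 0) (γ 1) ^ 2 : ℝ) : EReal)

/-- The resolvent `J_τ^f x`: the set of minimizers of `y ↦ f y + d(y,x)²/(2τ)`. -/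
def resolvSet (f : X → EReal) (τ : ℝ) (x : X) : Set X :=
  {u | ∀ y : X, f u + ((dist u x ^ 2 / (2 * τ) : ℝ) : EReal)
      ≤ f y + ((dist y x ^ 2 / (2 * τ) : ℝ) : EReal)}

def IsBoundedSeq (u : ℕ → X) : Prop := ∃ R : ℝ, ∀ n, dist (u n) (u 0) ≤ R

/-- `x` is the asymptotic centre of the (bounded) sequence `u`, i.e. the unique minimizer of
`y ↦ limsup_n d(y, u n)²`. -/
def IsAsympCentre (u : ℕ → X) (x : X) : Prop :=
  ∀ y : X, y ≠ x →
    Filter.limsup (fun n => dist x (u n) ^ 2) Filter.atTop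
      < Filter.limsup (fun n => dist y (u n) ^ 2) Filter.atTop

/-- Weak convergence: `u` is bounded and `x` is the asymptotic centre of every subsequence. -/
def WeakConv (u : ℕ → X) (x : X) : Prop :=
  IsBoundedSeq u ∧ ∀ φ : ℕ → ℕ, StrictMono φ → IsAsympCentre (u ∘ φ) x

/-- Mosco convergence of `F h` to `f`. -/
def MoscoConv (F : ℕ → X → EReal) (f : X → EReal) : Prop :=
  (∀ (u : ℕ → X) (x : X), WeakConv u x →
      f x ≤ Filter.liminf (fun h => F h (u h)) Filter.atTop) ∧
  (∀ x : X, ∃ u : ℕ → X, Filter.Tendsto u Filter.atTop (𝓝 x) ∧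
      Filter.limsup (fun h => F h (u h)) Filter.atTop ≤ f x)

/-- (Metric) Γ-convergence of `F h` to `f`. -/
def GammaConvSeq (F : ℕ → X → EReal) (f : X → EReal) : Prop :=
  (∀ (u : ℕ → X) (x : X), Filter.Tendsto u Filter.atTop (𝓝 x) →
      f x ≤ Filter.liminf (fun h => F h (u h)) Filter.atTop) ∧
  (∀ x : X, ∃ u : ℕ → X, Filter.Tendsto u Filter.atTop (𝓝 x) ∧
      Filter.limsup (fun h => F h (u h)) Filter.atTop ≤ f x)

/-- Assumption 2.4.5 of Ambrosio-Gigli-Savaré: convexity of the Moreau-Yosida perturbations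
along some curve, with base point `x₀`. -/
def AssumptionA1 (f : X → EReal) (lam : ℝ) : Prop :=
  ∀ x₀ x₁ : X, f x₀ ≠ ⊤ → f x₁ ≠ ⊤ →
    ∃ γ : ℝ → X, γ 0 = x₀ ∧ γ 1 = x₁ ∧
      ∀ τ : ℝ, 0 < τ → τ * max (-lam) 0 < 1 →
        ∀ t ∈ Set.Icc (0:ℝ) 1,
          f (γ t) ≤ (((1 - t) * (f x₀).toReal
            + t * ((f x₁).toReal + dist x₁ x₀ ^ 2 / (2 * τ))
            - (1 / 2) * (lam + 1 / τ) * t * (1 - t) * dist x₀ x₁ ^ 2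
            - dist (γ t) x₀ ^ 2 / (2 * τ) : ℝ) : EReal)

/-- Assumption 4.0.1 of Ambrosio-Gigli-Savaré: convexity of the Moreau-Yosida perturbations
along some curve, for every base point `y`. -/
def AssumptionA2 (f : X → EReal) (lam : ℝ) : Prop :=
  ∀ y x₀ x₁ : X, f y ≠ ⊤ → f x₀ ≠ ⊤ → f x₁ ≠ ⊤ →
    ∃ γ : ℝ → X, γ 0 = x₀ ∧ γ 1 = x₁ ∧
      ∀ τ : ℝ, 0 < τ → τ * max (-lam) 0 < 1 →
        ∀ t ∈ Set.Icc (0:ℝ) 1,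
          f (γ t) ≤ (((1 - t) * ((f x₀).toReal + dist x₀ y ^ 2 / (2 * τ))
            + t * ((f x₁).toReal + dist x₁ y ^ 2 / (2 * τ))
            - (1 / 2) * (lam + 1 / τ) * t * (1 - t) * dist x₀ x₁ ^ 2
            - dist (γ t) y ^ 2 / (2 * τ) : ℝ) : EReal)

/-- `G` is an `EVI_λ` gradient flow trajectory for `f` starting at `x`. -/
def IsEVIFlow (f : X → EReal) (lam : ℝ) (x : X) (G : ℝ → X) : Prop :=
  G 0 = x ∧ Filter.Tendsto G (𝓝[>] (0:ℝ)) (𝓝 x) ∧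
  (∀ t : ℝ, 0 < t → f (G t) ≠ ⊤) ∧
  (∀ a b : ℝ, 0 < a → a ≤ b → IsACCurveOn G a b) ∧
  ∀ v : X, f v ≠ ⊤ →
    ∀ᵐ t ∂(MeasureTheory.volume.restrict (Set.Ioi (0:ℝ))),
      ∃ L : ℝ, HasDerivAt (fun s => dist (G s) v ^ 2) L t ∧
        f (G t) + ((L / 2 + lam / 2 * dist (G t) v ^ 2 : ℝ) : EReal) ≤ f v

/-- Γ-convergence of the functionals `Th h` to `T` on `C([0,1], X)` with respect to uniform
convergence on `[0,1]`. -/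
def ThetaGammaConv (Th : ℕ → (ℝ → X) → ℝ≥0∞) (T : (ℝ → X) → ℝ≥0∞) : Prop :=
  (∀ γ : ℝ → X, ContinuousOn γ (Set.Icc 0 1) →
    ∀ Γ : ℕ → ℝ → X, (∀ h, ContinuousOn (Γ h) (Set.Icc 0 1)) →
      TendstoUniformlyOn (fun h t => Γ h t) γ Filter.atTop (Set.Icc 0 1) →
      T γ ≤ Filter.liminf (fun h => Th h (Γ h)) Filter.atTop) ∧
  (∀ γ : ℝ → X, ContinuousOn γ (Set.Icc 0 1) →
    ∃ Γ : ℕ → ℝ → X, (∀ h, ContinuousOn (Γ h) (Set.Icc 0 1)) ∧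
      TendstoUniformlyOn (fun h t => Γ h t) γ Filter.atTop (Set.Icc 0 1) ∧
      Filter.limsup (fun h => Th h (Γ h)) Filter.atTop ≤ T γ)

end Defs

lemma myLimsupAddTendsto {a c : ℕ → ℝ} {L : ℝ}
    (h1 : Filter.IsBoundedUnder (· ≤ ·) Filter.atTop a)
    (h2 : Filter.IsBoundedUnder (· ≥ ·) Filter.atTop a)
    (hc : Filter.Tendsto c Filter.atTop (𝓝 L)) :
    Filter.limsup (fun n => a n + c n) Filter.atTop = Filter.limsup a Filter.atTop + L := by
  have hcb1 : IsBoundedUnder (· ≤ ·) atTop c := hc.isBoundedUnder_le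
  have hcb2 : IsBoundedUnder (· ≥ ·) atTop c := hc.isBoundedUnder_ge
  have hls : limsup c atTop = L := hc.limsup_eq
  apply le_antisymm
  · have := limsup_add_le (f := atTop) (u := a) (v := c) h2 h1
      hcb2.isCoboundedUnder_le hcb1
    rw [hls] at this
    exact this
  · have hnc : Tendsto (fun n => -c n) atTop (𝓝 (-L)) := hc.neg
    have hb1 : IsBoundedUnder (· ≤ ·) atTop (a + c) := isBoundedUnder_le_add h1 hcb1
    have hb2 : IsBoundedUnder (· ≥ ·) atTop (a + c) := isBoundedUnder_ge_add h2 hcb2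
    have key := limsup_add_le (f := atTop) (u := a + c) (v := fun n => -c n) hb2 hb1
      hnc.isBoundedUnder_ge.isCoboundedUnder_le hnc.isBoundedUnder_le
    have heq : ((a + c) + fun n => -c n) = a := by funext n; simp [add_assoc]
    rw [heq, hnc.limsup_eq] at key
    have : limsup (a + c) atTop = limsup (fun n => a n + c n) atTop := rfl
    linarith [key]



open scoped InnerProductSpace in
/-- In a Hilbert space, weak convergence of a bounded sequence coincides with the condition
that the limit is the asymptotic centre (unique minimizer of `y ↦ limsup ‖y - x_{h_k}‖²`) of
every subsequence. -/
theorem statement5 {H : Type*} [NormedAddCommGroup H] [InnerProductSpace ℝ H]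
    [CompleteSpace H] (u : ℕ → H) (x : H) (hb : ∃ R : ℝ, ∀ n, ‖u n‖ ≤ R) :
    (∀ y : H, Filter.Tendsto (fun n => ⟪u n, y⟫_ℝ) Filter.atTop (𝓝 ⟪x, y⟫_ℝ)) ↔
      (∀ φ : ℕ → ℕ, StrictMono φ →
        (∀ y : H, Filter.limsup (fun k => ‖x - u (φ k)‖ ^ 2) Filter.atTop ≤
            Filter.limsup (fun k => ‖y - u (φ k)‖ ^ 2) Filter.atTop) ∧
        (∀ y : H, Filter.limsup (fun k => ‖y - u (φ k)‖ ^ 2) Filter.atTop ≤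
            Filter.limsup (fun k => ‖x - u (φ k)‖ ^ 2) Filter.atTop → y = x)) := by
  obtain ⟨R, hR⟩ := hb
  have bddle' : ∀ (w : H) (φ : ℕ → ℕ) (k : ℕ), ‖w - u (φ k)‖ ^ 2 ≤ (‖w‖ + R) ^ 2 := by
    intro w φ k
    have h1 : ‖w - u (φ k)‖ ≤ ‖w‖ + R := (norm_sub_le _ _).trans (by linarith [hR (φ k)])
    exact pow_le_pow_left₀ (norm_nonneg _) h1 2
  have bddle : ∀ (w : H) (φ : ℕ → ℕ),
      IsBoundedUnder (· ≤ ·) atTop (fun k => ‖w - u (φ k)‖ ^ 2) := fun w φ =>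
    isBoundedUnder_of ⟨(‖w‖ + R) ^ 2, bddle' w φ⟩
  have bddge : ∀ (w : H) (φ : ℕ → ℕ),
      IsBoundedUnder (· ≥ ·) atTop (fun k => ‖w - u (φ k)‖ ^ 2) := fun w φ =>
    isBoundedUnder_of ⟨0, fun k => sq_nonneg _⟩
  constructor
  · intro hw φ hφ
    have key : ∀ y : H, limsup (fun k => ‖y - u (φ k)‖ ^ 2) atTop
        = limsup (fun k => ‖x - u (φ k)‖ ^ 2) atTop + ‖y - x‖ ^ 2 := by
      intro y
      have hexp : ∀ k, ‖y - u (φ k)‖ ^ 2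
          = ‖x - u (φ k)‖ ^ 2 + (2 * ⟪y - x, x - u (φ k)⟫_ℝ + ‖y - x‖ ^ 2) := by
        intro k
        have hk : y - u (φ k) = (y - x) + (x - u (φ k)) := by abel
        rw [hk, norm_add_sq_real]
        ring
      have hc : Tendsto (fun k => 2 * ⟪y - x, x - u (φ k)⟫_ℝ + ‖y - x‖ ^ 2) atTop
          (𝓝 (‖y - x‖ ^ 2)) := by
        have h0 : Tendsto (fun k => ⟪u (φ k), y - x⟫_ℝ) atTop (𝓝 ⟪x, y - x⟫_ℝ) :=
          (hw (y - x)).comp hφ.tendsto_atTop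
        have heq : (fun k => 2 * ⟪y - x, x - u (φ k)⟫_ℝ + ‖y - x‖ ^ 2)
            = fun k => 2 * (⟪x, y - x⟫_ℝ - ⟪u (φ k), y - x⟫_ℝ) + ‖y - x‖ ^ 2 := by
          funext k
          simp only [inner_sub_left, inner_sub_right]
          rw [real_inner_comm y x, real_inner_comm y (u (φ k)), real_inner_comm x (u (φ k))]
        rw [heq]
        have h1 : Tendsto (fun k => 2 * (⟪x, y - x⟫_ℝ - ⟪u (φ k), y - x⟫_ℝ) + ‖y - x‖ ^ 2)
            atTop (𝓝 (2 * (⟪x, y - x⟫_ℝ - ⟪x, y - x⟫_ℝ) + ‖y - x‖ ^ 2)) :=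
          ((tendsto_const_nhds.sub h0).const_mul 2).add tendsto_const_nhds
        simpa using h1
      calc limsup (fun k => ‖y - u (φ k)‖ ^ 2) atTop
          = limsup (fun k => ‖x - u (φ k)‖ ^ 2
              + (2 * ⟪y - x, x - u (φ k)⟫_ℝ + ‖y - x‖ ^ 2)) atTop := by
            simp only [hexp]
        _ = _ := myLimsupAddTendsto (bddle x φ) (bddge x φ) hc
    constructor
    · intro y
      rw [key y]
      nlinarith [sq_nonneg ‖y - x‖]
    · intro y hy
      rw [key y] at hy
      have h0 : ‖y - x‖ ^ 2 ≤ 0 := by linarith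
      have h1 : ‖y - x‖ = 0 := by nlinarith [norm_nonneg (y - x)]
      have h2 : y - x = 0 := norm_eq_zero.mp h1
      exact sub_eq_zero.mp h2
  · intro H2 y
    have claim : ∀ (z : H) (ε : ℝ), 0 < ε → ¬ (∃ᶠ n in atTop, ε ≤ ⟪u n - x, z⟫_ℝ) := by
      intro z ε hε hfreq
      obtain ⟨φ, hφ, hmem⟩ := Filter.extraction_of_frequently_atTop hfreq
      have hz : z ≠ 0 := by
        intro h
        have := hmem 0
        rw [h] at this
        simp only [inner_zero_right] at this
        linarith
      have hz2 : (0:ℝ) < ‖z‖ ^ 2 := pow_pos (norm_pos_iff.mpr hz) 2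
      set t : ℝ := ε / ‖z‖ ^ 2 with ht
      have ht0 : 0 < t := div_pos hε hz2
      set m : ℝ := -(ε ^ 2 / ‖z‖ ^ 2) with hm
      have hm0 : m < 0 := by
        rw [hm]
        have : 0 < ε ^ 2 / ‖z‖ ^ 2 := div_pos (pow_pos hε 2) hz2
        linarith
      have hptw : ∀ k, ‖(x + t • z) - u (φ k)‖ ^ 2 ≤ ‖x - u (φ k)‖ ^ 2 + m := by
        intro k
        have hexp : (x + t • z) - u (φ k) = (x - u (φ k)) + t • z := by abel
        rw [hexp, norm_add_sq_real, real_inner_smul_right]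
        have h2 : ⟪x - u (φ k), z⟫_ℝ ≤ -ε := by
          have hmk := hmem k
          have hne : ⟪u (φ k) - x, z⟫_ℝ = -⟪x - u (φ k), z⟫_ℝ := by
            rw [← inner_neg_left]
            congr 1
            abel
          rw [hne] at hmk
          linarith
        have hns : ‖t • z‖ ^ 2 = t ^ 2 * ‖z‖ ^ 2 := by
          rw [norm_smul, mul_pow, Real.norm_eq_abs, sq_abs]
        rw [hns]
        have htval : t ^ 2 * ‖z‖ ^ 2 = ε ^ 2 / ‖z‖ ^ 2 := by
          rw [ht]
          field_simp
        have h3 : 2 * (t * ⟪x - u (φ k), z⟫_ℝ) ≤ 2 * (t * (-ε)) := by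
          have := mul_le_mul_of_nonneg_left h2 ht0.le
          linarith
        have htm : 2 * (t * (-ε)) = -(2 * (ε ^ 2 / ‖z‖ ^ 2)) := by
          rw [ht]; ring
        rw [hm]
        linarith [h3]
      have h1 := (H2 φ hφ).1 (x + t • z)
      have h2 : limsup (fun k => ‖(x + t • z) - u (φ k)‖ ^ 2) atTop
          ≤ limsup (fun k => ‖x - u (φ k)‖ ^ 2 + m) atTop :=
        limsup_le_limsup (Eventually.of_forall hptw) ((bddge _ φ).isCoboundedUnder_le)
          (isBoundedUnder_of ⟨(‖x‖ + R) ^ 2 + m, fun k => add_le_add_left (bddle' x φ k) m⟩)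
      have h3 : limsup (fun k => ‖x - u (φ k)‖ ^ 2 + m) atTop
          = limsup (fun k => ‖x - u (φ k)‖ ^ 2) atTop + m :=
        myLimsupAddTendsto (bddle x φ) (bddge x φ) tendsto_const_nhds
      linarith
    by_contra hnot
    rw [Metric.tendsto_atTop] at hnot
    push_neg at hnot
    obtain ⟨ε, hε, hfr⟩ := hnot
    have hfreq : ∃ᶠ n in atTop, ε ≤ |⟪u n - x, y⟫_ℝ| := by
      rw [frequently_atTop]
      intro N
      obtain ⟨n, hn1, hn2⟩ := hfr N
      refine ⟨n, hn1, ?_⟩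
      rw [Real.dist_eq] at hn2
      have heq : ⟪u n, y⟫_ℝ - ⟪x, y⟫_ℝ = ⟪u n - x, y⟫_ℝ := (inner_sub_left _ _ _).symm
      rw [heq] at hn2
      exact hn2
    have hsplit : (∃ᶠ n in atTop, ε ≤ ⟪u n - x, y⟫_ℝ)
        ∨ (∃ᶠ n in atTop, ε ≤ ⟪u n - x, -y⟫_ℝ) := by
      apply frequently_or_distrib.mp
      refine hfreq.mono fun n hn => ?_
      rcases le_abs.mp hn with h | h
      · exact Or.inl h
      · exact Or.inr (by rwa [inner_neg_right])
    rcases hsplit with h | h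
    · exact claim y ε hε h
    · exact claim (-y) ε hε h
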